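/- Let σ = [p₀, …, p_k] be a non-degenerate k-simplex in ℝ^m with k > 0, and let P be the m × k matrix whose i-th column is p_i − p₀. Then the i-th row of the pseudo-inverse P⁺ = (PᵀP)⁻¹Pᵀ is wᵢᵀ, where wᵢ is orthogonal to the affine hull of the facet of σ opposite pᵢ and ‖wᵢ‖ = 1/D(pᵢ,σ), where D(pᵢ,σ) is the altitude of pᵢ in σ. Consequently the smallest singular value satisfies s_k(P) ≥ √k · t(σ) · L(σ). -/

import Mathlib

open Matrix Metric
open scoped Classical BigOperators

noncomputable section

/-- Euclidean space ℝ^m. -/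
abbrev E (m : ℕ) := EuclideanSpace ℝ (Fin m)

/-- Euclidean norm of a plain vector. -/
noncomputable def euclNorm {n : ℕ} (v : Fin n → ℝ) : ℝ := Real.sqrt (∑ i, v i ^ 2)

/-- Largest singular value (operator norm) of a matrix. -/
noncomputable def largeSV {m k : ℕ} (P : Matrix (Fin m) (Fin k) ℝ) : ℝ :=
  ⨆ x : {x : Fin k → ℝ // euclNorm x = 1}, euclNorm (P.mulVec x)

/-- Smallest singular value of a matrix. -/
noncomputable def smallSV {m k : ℕ} (P : Matrix (Fin m) (Fin k) ℝ) : ℝ :=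
  ⨅ x : {x : Fin k → ℝ // euclNorm x = 1}, euclNorm (P.mulVec x)

/-- Matrix of edge vectors pᵢ − p₀ of a k-simplex. -/
noncomputable def vertMatrix {m k : ℕ} (p : Fin (k+1) → E m) : Matrix (Fin m) (Fin k) ℝ :=
  fun a j => p j.succ a - p 0 a

/-- Pseudo-inverse (PᵀP)⁻¹Pᵀ of a matrix of full column rank. -/
noncomputable def pseudoInv {m k : ℕ} (P : Matrix (Fin m) (Fin k) ℝ) :
    Matrix (Fin k) (Fin m) ℝ := (Pᵀ * P)⁻¹ * Pᵀ

/-- Longest edge length of a simplex given by its vertices. -/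
noncomputable def longEdge {m k : ℕ} (p : Fin (k+1) → E m) : ℝ :=
  ⨆ i, ⨆ j, dist (p i) (p j)

/-- Altitude of vertex i: distance to affine hull of the opposite facet. -/
noncomputable def altitude {m k : ℕ} (p : Fin (k+1) → E m) (i : Fin (k+1)) : ℝ :=
  Metric.infDist (p i) (↑(affineSpan ℝ (p '' {j | j ≠ i})) : Set (E m))

/-- Thickness of a k-simplex: 1 if k = 0, else min altitude / (k · longest edge). -/
noncomputable def thickness {m k : ℕ} (p : Fin (k+1) → E m) : ℝ :=
  if k = 0 then 1 else (⨅ i, altitude p i) / (k * longEdge p)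

/-- Longest edge of a finite vertex set. -/
noncomputable def fLongEdge {m : ℕ} (s : Finset (E m)) : ℝ := Metric.diam (s : Set (E m))

/-- Minimal altitude of a finite vertex set. -/
noncomputable def fMinAlt {m : ℕ} (s : Finset (E m)) : ℝ :=
  ⨅ p : {p // p ∈ s},
    Metric.infDist (p : E m) (↑(affineSpan ℝ ((s.erase (p : E m)) : Set (E m))) : Set (E m))

/-- Thickness of a simplex given as a finite vertex set. -/
noncomputable def fThickness {m : ℕ} (s : Finset (E m)) : ℝ :=
  if s.card ≤ 1 then 1 else fMinAlt s / ((s.card - 1 : ℕ) * fLongEdge s)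

/-- A simplex (finite vertex set) is Γ₀-good if every j-face has thickness ≥ Γ₀^j. -/
def isGood {m : ℕ} (Γ₀ : ℝ) (s : Finset (E m)) : Prop :=
  ∀ t ⊆ s, t.Nonempty → fThickness t ≥ Γ₀ ^ (t.card - 1)

/-- A Γ₀-flake: not Γ₀-good, but every facet is Γ₀-good. -/
def isFlake {m : ℕ} (Γ₀ : ℝ) (s : Finset (E m)) : Prop :=
  ¬ isGood Γ₀ s ∧ ∀ p ∈ s, isGood Γ₀ (s.erase p)

namespace Stmt0Aux

open Finset

variable {m k : ℕ}

/-- The affine span of the facet opposite vertex `i.succ`. -/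
abbrev HS (p : Fin (k+1) → E m) (i : Fin k) : AffineSubspace ℝ (E m) :=
  affineSpan ℝ (p '' {j | j ≠ i.succ})

lemma mem_HS (p : Fin (k+1) → E m) (i : Fin k) {j : Fin (k+1)} (hj : j ≠ i.succ) :
    p j ∈ HS p i :=
  subset_affineSpan ℝ _ ⟨j, hj, rfl⟩

lemma col_mem_direction (p : Fin (k+1) → E m) (i : Fin k) {j : Fin k} (hj : j ≠ i) :
    p j.succ - p 0 ∈ (HS p i).direction := by
  have h1 : p j.succ ∈ HS p i := mem_HS p i (by simpa [Fin.succ_inj] using hj)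
  have h2 : p 0 ∈ HS p i := mem_HS p i (Ne.symm (Fin.succ_ne_zero i))
  simpa [vsub_eq_sub] using AffineSubspace.vsub_mem_direction h1 h2

lemma sum_mem_direction (p : Fin (k+1) → E m) (i : Fin k) (u : Fin k → ℝ) (hui : u i = 0) :
    (show E m from WithLp.toLp 2 fun a => ∑ j, vertMatrix p a j * u j) ∈ (HS p i).direction := by
  have hEq : (show E m from WithLp.toLp 2 fun a => ∑ j, vertMatrix p a j * u j)
      = ∑ j ∈ Finset.univ.erase i, u j • (p j.succ - p 0) := by
    ext a
    rw [WithLp.ofLp_sum, Finset.sum_apply]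
    rw [Finset.sum_erase (f := fun j => (u j • (p j.succ - p 0)) a)
      (h := by show u i * _ = 0; rw [hui, zero_mul])]
    show (∑ j, vertMatrix p a j * u j) = _
    apply Finset.sum_congr rfl
    intro j _
    show vertMatrix p a j * u j = u j * (p j.succ a - p 0 a)
    rw [mul_comm]; rfl
  rw [hEq]
  exact Submodule.sum_mem _ fun j hj =>
    Submodule.smul_mem _ _ (col_mem_direction p i (Finset.ne_of_mem_erase hj))

lemma kernel_trivial (p : Fin (k+1) → E m) (hA : ∀ j : Fin (k+1), 0 < altitude p j)
    (v : Fin k → ℝ) (hv : (vertMatrix p).mulVec v = 0) : v = 0 := by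
  by_contra hv0
  obtain ⟨i, hi⟩ := Function.ne_iff.1 hv0
  have hi' : v i ≠ 0 := hi
  set u : Fin k → ℝ := fun j => -v j + (Pi.single i (v i) : Fin k → ℝ) j with hu
  have hui : u i = 0 := by simp [hu]
  have hdir := sum_mem_direction p i u hui
  have hEq : (show E m from WithLp.toLp 2 fun a => ∑ j, vertMatrix p a j * u j)
      = v i • (p i.succ - p 0) := by
    ext a
    have hz : ∑ j, vertMatrix p a j * v j = 0 := congrFun hv a
    show (∑ j, vertMatrix p a j * u j) = v i * (p i.succ a - p 0 a)
    have : ∀ j, vertMatrix p a j * u j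
        = -(vertMatrix p a j * v j) + vertMatrix p a j * (Pi.single i (v i) : Fin k → ℝ) j := by
      intro j; simp [hu]; ring
    rw [Finset.sum_congr rfl fun j _ => this j, Finset.sum_add_distrib, Finset.sum_neg_distrib,
      hz, neg_zero, zero_add]
    have h1 : ∀ j, vertMatrix p a j * (Pi.single i (v i) : Fin k → ℝ) j
        = if i = j then vertMatrix p a i * v i else 0 := by
      intro j
      rcases eq_or_ne i j with rfl | hij
      · simp
      · simp [Pi.single_apply, hij.symm, if_neg hij]
    rw [Finset.sum_congr rfl fun j _ => h1 j, Finset.sum_ite_eq, if_pos (Finset.mem_univ i),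
      mul_comm]
    rfl
  rw [hEq] at hdir
  have hcol : p i.succ - p 0 ∈ (HS p i).direction := by
    have := Submodule.smul_mem _ (v i)⁻¹ hdir
    rwa [smul_smul, inv_mul_cancel₀ hi', one_smul] at this
  have hmem : p i.succ ∈ HS p i := by
    have := AffineSubspace.vadd_mem_of_mem_direction hcol (mem_HS p i (Ne.symm (Fin.succ_ne_zero i)))
    simpa [vadd_eq_add, sub_add_cancel] using this
  have : altitude p i.succ = 0 :=
    Metric.infDist_zero_of_mem hmem
  exact absurd this (ne_of_gt (hA i.succ))

lemma gram_isUnit (p : Fin (k+1) → E m) (hA : ∀ j : Fin (k+1), 0 < altitude p j) :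
    IsUnit ((vertMatrix p)ᵀ * vertMatrix p).det := by
  rw [isUnit_iff_ne_zero]
  intro hdet
  obtain ⟨v, hv0, hv⟩ := (Matrix.exists_mulVec_eq_zero_iff).2 hdet
  have h1 : v ⬝ᵥ ((vertMatrix p)ᵀ * vertMatrix p).mulVec v = 0 := by rw [hv]; simp
  rw [← Matrix.mulVec_mulVec, Matrix.dotProduct_mulVec, Matrix.vecMul_transpose] at h1
  have h2 : ∀ a, (vertMatrix p).mulVec v a = 0 := by
    intro a
    have hnn : ∀ b ∈ Finset.univ, (0:ℝ) ≤ (vertMatrix p).mulVec v b * (vertMatrix p).mulVec v b :=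
      fun b _ => mul_self_nonneg _
    have := (Finset.sum_eq_zero_iff_of_nonneg hnn).1 h1 a (Finset.mem_univ a)
    exact mul_self_eq_zero.1 this
  exact hv0 (kernel_trivial p hA v (funext h2))

/-- The linear functional given by a row vector. -/
def phi (w : Fin m → ℝ) : E m →ₗ[ℝ] ℝ where
  toFun x := ∑ a, w a * x a
  map_add' x y := by
    show (∑ a, w a * (x a + y a)) = (∑ a, w a * x a) + ∑ a, w a * y a
    rw [← Finset.sum_add_distrib]
    exact Finset.sum_congr rfl fun a _ => by ring
  map_smul' c x := by
    show (∑ a, w a * (c * x a)) = c * ∑ a, w a * x a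
    rw [Finset.mul_sum]
    exact Finset.sum_congr rfl fun a _ => by ring

lemma phi_apply (w : Fin m → ℝ) (x : E m) : phi w x = ∑ a, w a * x a := rfl

section DualRows

variable {p : Fin (k+1) → E m} (hA : ∀ j : Fin (k+1), 0 < altitude p j)

include hA

lemma pinv_mul : pseudoInv (vertMatrix p) * vertMatrix p = 1 := by
  rw [pseudoInv, Matrix.mul_assoc, Matrix.nonsing_inv_mul _ (gram_isUnit p hA)]

lemma dual_eq (i j : Fin k) :
    ∑ a, pseudoInv (vertMatrix p) i a * vertMatrix p a j = if i = j then 1 else 0 := by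
  have h := congrFun (congrFun (pinv_mul hA) i) j
  rwa [Matrix.mul_apply, Matrix.one_apply] at h

omit hA

lemma row_apply (i : Fin k) (a : Fin m) :
    pseudoInv (vertMatrix p) i a
      = ∑ j, ((vertMatrix p)ᵀ * vertMatrix p)⁻¹ i j * vertMatrix p a j := by
  rw [pseudoInv, Matrix.mul_apply]
  exact Finset.sum_congr rfl fun j _ => by rw [Matrix.transpose_apply]

include hA

lemma phi_dir (i : Fin k) {u : E m} (hu : u ∈ (HS p i).direction) :
    ∑ a, pseudoInv (vertMatrix p) i a * u a = 0 := by
  have hle : (HS p i).direction ≤ LinearMap.ker (phi (pseudoInv (vertMatrix p) i)) := by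
    rw [direction_affineSpan, vectorSpan_def, Submodule.span_le]
    intro z hz
    rw [Set.mem_vsub] at hz
    obtain ⟨x, hx, y, hy, rfl⟩ := hz
    obtain ⟨a, ha, rfl⟩ := hx
    obtain ⟨b, hb, rfl⟩ := hy
    have key : ∀ c : Fin (k+1), c ≠ i.succ →
        phi (pseudoInv (vertMatrix p) i) (p c - p 0) = 0 := by
      intro c
      induction c using Fin.cases with
      | zero => intro _; simp
      | succ j =>
        intro hc
        have hj : j ≠ i := fun h => hc (by rw [h])
        have hd := dual_eq hA i j
        rw [if_neg (fun h => hj h.symm)] at hd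
        rw [phi_apply]
        exact hd
    have hsub : p a -ᵥ p b = (p a - p 0) - (p b - p 0) := by rw [vsub_eq_sub]; abel
    rw [SetLike.mem_coe, LinearMap.mem_ker, hsub, map_sub, key a ha, key b hb, sub_zero]
  exact LinearMap.mem_ker.mp (hle hu)

lemma normsq_eq (i : Fin k) :
    ∑ a, pseudoInv (vertMatrix p) i a ^ 2 = ((vertMatrix p)ᵀ * vertMatrix p)⁻¹ i i := by
  have h : ∀ a, pseudoInv (vertMatrix p) i a ^ 2
      = ∑ j, ((vertMatrix p)ᵀ * vertMatrix p)⁻¹ i j *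
          (pseudoInv (vertMatrix p) i a * vertMatrix p a j) := by
    intro a
    have h0 : pseudoInv (vertMatrix p) i a ^ 2
        = (∑ j, ((vertMatrix p)ᵀ * vertMatrix p)⁻¹ i j * vertMatrix p a j)
            * pseudoInv (vertMatrix p) i a := by
      rw [← row_apply, pow_two]
    rw [h0, Finset.sum_mul]
    exact Finset.sum_congr rfl fun j _ => by ring
  rw [Finset.sum_congr rfl fun a _ => h a, Finset.sum_comm]
  have h2 : ∀ j, (∑ a, ((vertMatrix p)ᵀ * vertMatrix p)⁻¹ i j *
        (pseudoInv (vertMatrix p) i a * vertMatrix p a j))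
      = ((vertMatrix p)ᵀ * vertMatrix p)⁻¹ i j * (if i = j then 1 else 0) := by
    intro j
    rw [← Finset.mul_sum, dual_eq hA i j]
  rw [Finset.sum_congr rfl fun j _ => h2 j]
  simp [mul_ite, Finset.sum_ite_eq]

lemma normsq_pos (i : Fin k) : 0 < ∑ a, pseudoInv (vertMatrix p) i a ^ 2 := by
  have hd := dual_eq hA i i
  rw [if_pos rfl] at hd
  rcases (Finset.sum_nonneg fun a (_ : a ∈ Finset.univ) =>
      sq_nonneg (pseudoInv (vertMatrix p) i a)).lt_or_eq with h | h
  · exact h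
  · exfalso
    have hz : ∀ a, pseudoInv (vertMatrix p) i a = 0 := by
      intro a
      have := (Finset.sum_eq_zero_iff_of_nonneg
        (fun a (_ : a ∈ Finset.univ) => sq_nonneg (pseudoInv (vertMatrix p) i a))).1 h.symm a
        (Finset.mem_univ a)
      exact pow_eq_zero_iff (two_ne_zero) |>.1 this
    rw [Finset.sum_congr rfl fun a _ => by rw [hz a, zero_mul]] at hd
    simp at hd

lemma altitude_eq_inv_norm (i : Fin k) :
    altitude p i.succ = (euclNorm fun a => pseudoInv (vertMatrix p) i a)⁻¹ := by
  set W : Fin m → ℝ := fun a => pseudoInv (vertMatrix p) i a with hW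
  set WE : E m := WithLp.toLp 2 fun a => W a with hWE
  set S : ℝ := ∑ a, W a ^ 2 with hSdef
  have hS : 0 < S := normsq_pos hA i
  have hNval : euclNorm W = Real.sqrt S := by rw [euclNorm]
  have hN : 0 < euclNorm W := by rw [hNval]; exact Real.sqrt_pos.2 hS
  have hNsq : euclNorm W ^ 2 = S := by rw [hNval, Real.sq_sqrt hS.le]
  have hq0 : p 0 ∈ HS p i := mem_HS p i (Ne.symm (Fin.succ_ne_zero i))
  have hpair : ∀ y : E m, y ∈ HS p i → ∑ a, W a * (p i.succ a - y a) = 1 := by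
    intro y hy
    have h1 : ∑ a, W a * (p i.succ a - p 0 a) = 1 := by
      have hd := dual_eq hA i i
      rw [if_pos rfl] at hd
      exact hd
    have h2 : ∑ a, W a * ((p 0 - y) a) = 0 :=
      phi_dir hA i (AffineSubspace.vsub_mem_direction hq0 hy)
    have h3 : ∀ a, W a * (p i.succ a - y a)
        = W a * (p i.succ a - p 0 a) + W a * ((p 0 - y) a) := by
      intro a
      show _ = _ + W a * (p 0 a - y a)
      ring
    rw [Finset.sum_congr rfl fun a _ => h3 a, Finset.sum_add_distrib, h1, h2, add_zero]
  have hdist : ∀ y : E m, dist (p i.succ) y = Real.sqrt (∑ a, (p i.succ a - y a) ^ 2) := by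
    intro y
    rw [EuclideanSpace.dist_eq]
    congr 1
    exact Finset.sum_congr rfl fun a _ => by rw [Real.dist_eq, sq_abs]
  have hlow : ∀ y : E m, y ∈ HS p i → (euclNorm W)⁻¹ ≤ dist (p i.succ) y := by
    intro y hy
    have hcs := Finset.sum_mul_sq_le_sq_mul_sq Finset.univ W (fun a => p i.succ a - y a)
    rw [hpair y hy, one_pow] at hcs
    have hd2 : dist (p i.succ) y ^ 2 = ∑ a, (p i.succ a - y a) ^ 2 := by
      rw [hdist y, Real.sq_sqrt (Finset.sum_nonneg fun a _ => sq_nonneg _)]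
    have h1 : (1:ℝ) ≤ (euclNorm W * dist (p i.succ) y) ^ 2 := by
      rw [mul_pow, hNsq, hd2]
      exact hcs
    have h2 : (1:ℝ) ≤ euclNorm W * dist (p i.succ) y := by
      nlinarith [mul_nonneg hN.le (dist_nonneg (x := p i.succ) (y := y))]
    rw [inv_eq_one_div, div_le_iff₀ hN]
    linarith [mul_comm (euclNorm W) (dist (p i.succ) y)]
  have hSc : S = ((vertMatrix p)ᵀ * vertMatrix p)⁻¹ i i := normsq_eq hA i
  set t : Fin k → ℝ :=
    fun j => (if j = i then 1 else 0) - S⁻¹ * ((vertMatrix p)ᵀ * vertMatrix p)⁻¹ i j with ht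
  have hti : t i = 0 := by
    have h0 : t i = 1 - S⁻¹ * ((vertMatrix p)ᵀ * vertMatrix p)⁻¹ i i := by simp [ht]
    rw [h0, ← hSc, inv_mul_cancel₀ hS.ne', sub_self]
  have hu := sum_mem_direction p i t hti
  have huEq : (show E m from WithLp.toLp 2 fun a => ∑ j, vertMatrix p a j * t j)
      = (p i.succ - p 0) - S⁻¹ • WE := by
    ext a
    show (∑ j, vertMatrix p a j * t j) = (p i.succ a - p 0 a) - S⁻¹ * W a
    have hterm : ∀ j, vertMatrix p a j * t j
        = (if j = i then vertMatrix p a j else 0)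
          - S⁻¹ * (((vertMatrix p)ᵀ * vertMatrix p)⁻¹ i j * vertMatrix p a j) := by
      intro j
      rw [ht]
      rcases eq_or_ne j i with rfl | hj
      · simp; ring
      · simp [if_neg hj]; ring
    rw [Finset.sum_congr rfl fun j _ => hterm j, Finset.sum_sub_distrib,
      Finset.sum_ite_eq' Finset.univ i (fun j => vertMatrix p a j), if_pos (Finset.mem_univ i),
      ← Finset.mul_sum, ← row_apply i a]
    rfl
  rw [huEq] at hu
  have hyst : ((p i.succ - p 0) - S⁻¹ • WE) +ᵥ p 0 = p i.succ - S⁻¹ • WE := by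
    rw [vadd_eq_add]; abel
  have hymem : p i.succ - S⁻¹ • WE ∈ HS p i := by
    rw [← hyst]
    exact AffineSubspace.vadd_mem_of_mem_direction hu hq0
  have hdist2 : dist (p i.succ) (p i.succ - S⁻¹ • WE) = (euclNorm W)⁻¹ := by
    rw [hdist]
    have hcoord : ∀ a, p i.succ a - (p i.succ - S⁻¹ • WE) a = S⁻¹ * W a := by
      intro a
      show p i.succ a - (p i.succ a - S⁻¹ * W a) = S⁻¹ * W a
      ring
    rw [Finset.sum_congr rfl fun a _ => by rw [hcoord a, mul_pow]]
    rw [← Finset.mul_sum, ← hSdef]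
    have hss : S⁻¹ ^ 2 * S = S⁻¹ := by
      rw [sq, mul_assoc, inv_mul_cancel₀ hS.ne', mul_one]
    rw [hss, Real.sqrt_inv, hNval]
  have hub : altitude p i.succ ≤ (euclNorm W)⁻¹ := by
    rw [altitude, ← hdist2]
    exact Metric.infDist_le_dist_of_mem hymem
  have hlb : (euclNorm W)⁻¹ ≤ altitude p i.succ := by
    rw [altitude, Metric.infDist_eq_iInf]
    have hne : Nonempty (↑(affineSpan ℝ (p '' {j | j ≠ i.succ})) : Set (E m)) :=
      ⟨⟨p 0, hq0⟩⟩
    exact le_ciInf fun y => hlow y y.2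
  exact le_antisymm hub hlb

lemma norm_row_eq (i : Fin k) :
    euclNorm (fun a => pseudoInv (vertMatrix p) i a) = (altitude p i.succ)⁻¹ := by
  rw [altitude_eq_inv_norm hA i, inv_inv]

end DualRows

section Final

variable {p : Fin (k+1) → E m}

lemma pos_facts (hk : 0 < k) (hnd : 0 < thickness p) :
    0 < (⨅ i, altitude p i) ∧ 0 < longEdge p := by
  rw [thickness, if_neg hk.ne'] at hnd
  have hL0 : 0 ≤ longEdge p :=
    Real.iSup_nonneg fun i => Real.iSup_nonneg fun j => dist_nonneg
  have hA0 : 0 ≤ ⨅ i, altitude p i := Real.iInf_nonneg fun i => Metric.infDist_nonneg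
  rcases hL0.lt_or_eq with hL | hL
  · refine ⟨?_, hL⟩
    have hkL : 0 < (k : ℝ) * longEdge p := mul_pos (Nat.cast_pos.2 hk) hL
    rcases div_pos_iff.1 hnd with ⟨h, _⟩ | ⟨_, h⟩
    · exact h
    · exact absurd h (not_lt.2 hkL.le)
  · exfalso
    rw [← hL, mul_zero, div_zero] at hnd
    exact lt_irrefl 0 hnd

lemma alt_lower (j : Fin (k+1)) : (⨅ i, altitude p i) ≤ altitude p j :=
  ciInf_le ⟨0, by rintro x ⟨i, rfl⟩; exact Metric.infDist_nonneg⟩ j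

lemma unit_nonempty (hk : 0 < k) : Nonempty {x : Fin k → ℝ // euclNorm x = 1} := by
  refine ⟨⟨Pi.single (⟨0, hk⟩ : Fin k) (1:ℝ), ?_⟩⟩
  rw [euclNorm]
  have h : ∑ j, (Pi.single (⟨0, hk⟩ : Fin k) (1:ℝ)) j ^ 2 = (1:ℝ) := by
    simp [Pi.single_apply, ite_pow, Finset.sum_ite_eq']
  rw [h, Real.sqrt_one]

lemma key_bound (hA : ∀ j : Fin (k+1), 0 < altitude p j) {A : ℝ} (hApos : 0 < A)
    (hAle : ∀ j : Fin (k+1), A ≤ altitude p j) (hk : 0 < k)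
    (x : Fin k → ℝ) (hx : euclNorm x = 1) :
    A / Real.sqrt k ≤ euclNorm ((vertMatrix p).mulVec x) := by
  set y : Fin m → ℝ := (vertMatrix p).mulVec x with hy
  set T : ℝ := ∑ a, y a ^ 2 with hT
  have hT0 : 0 ≤ T := Finset.sum_nonneg fun a _ => sq_nonneg _
  have hxj : ∀ j : Fin k, x j = ∑ a, pseudoInv (vertMatrix p) j a * y a := by
    intro j
    have h := Matrix.mulVec_mulVec x (pseudoInv (vertMatrix p)) (vertMatrix p)
    rw [pinv_mul hA, Matrix.one_mulVec] at h
    exact (congrFun h j).symm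
  have hsq : ∀ j : Fin k, x j ^ 2 ≤ A⁻¹ ^ 2 * T := by
    intro j
    have hcs := Finset.sum_mul_sq_le_sq_mul_sq Finset.univ
      (fun a => pseudoInv (vertMatrix p) j a) y
    rw [← hxj j] at hcs
    have hSj : ∑ a, pseudoInv (vertMatrix p) j a ^ 2 ≤ A⁻¹ ^ 2 := by
      have h1 : euclNorm (fun a => pseudoInv (vertMatrix p) j a) = (altitude p j.succ)⁻¹ :=
        norm_row_eq hA j
      have h2 : ∑ a, pseudoInv (vertMatrix p) j a ^ 2
          = euclNorm (fun a => pseudoInv (vertMatrix p) j a) ^ 2 := by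
        rw [euclNorm, Real.sq_sqrt (Finset.sum_nonneg fun a _ => sq_nonneg _)]
      rw [h2, h1]
      have h3 : (altitude p j.succ)⁻¹ ≤ A⁻¹ :=
        inv_anti₀ hApos (hAle j.succ)
      exact pow_le_pow_left₀ (inv_nonneg.2 (hA j.succ).le) h3 2
    calc x j ^ 2 ≤ (∑ a, pseudoInv (vertMatrix p) j a ^ 2) * T := hcs
      _ ≤ A⁻¹ ^ 2 * T := mul_le_mul_of_nonneg_right hSj hT0
  have hsum1 : ∑ j, x j ^ 2 = 1 := by
    have := hx
    rw [euclNorm] at this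
    exact Real.sqrt_eq_one.1 this
  have h1 : (1:ℝ) ≤ (k : ℝ) * (A⁻¹ ^ 2 * T) := by
    calc (1:ℝ) = ∑ j, x j ^ 2 := hsum1.symm
      _ ≤ ∑ _j : Fin k, A⁻¹ ^ 2 * T := Finset.sum_le_sum fun j _ => hsq j
      _ = (k : ℝ) * (A⁻¹ ^ 2 * T) := by
          rw [Finset.sum_const, Finset.card_univ, Fintype.card_fin, nsmul_eq_mul]
  have hA2 : (0:ℝ) < A ^ 2 := pow_pos hApos 2
  have hAA : A ^ 2 * A⁻¹ ^ 2 = 1 := by field_simp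
  have hTlow : A ^ 2 / (k : ℝ) ≤ T := by
    rw [div_le_iff₀ (Nat.cast_pos.2 hk)]
    nlinarith [mul_le_mul_of_nonneg_left h1 hA2.le]
  have : euclNorm y = Real.sqrt T := by rw [euclNorm]
  rw [show euclNorm ((vertMatrix p).mulVec x) = Real.sqrt T from this]
  have := Real.sqrt_le_sqrt hTlow
  calc A / Real.sqrt k = Real.sqrt (A ^ 2 / (k:ℝ)) := by
        rw [Real.sqrt_div (sq_nonneg A), Real.sqrt_sq hApos.le]
    _ ≤ Real.sqrt T := this

end Final



end Stmt0Aux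
/-- Thickness and singular value (Lemma: rows of the pseudo-inverse are dual vectors,
orthogonal to the opposite facet, with norm the inverse altitude; hence
s_k(P) ≥ √k · t(σ) · L(σ)). -/
theorem stmt0 {m k : ℕ} (hk : 0 < k) (p : Fin (k+1) → E m)
    (hnd : 0 < thickness p) :
    (∀ i : Fin k,
      (∀ x y : E m,
        x ∈ (↑(affineSpan ℝ (p '' {j | j ≠ i.succ})) : Set (E m)) →
        y ∈ (↑(affineSpan ℝ (p '' {j | j ≠ i.succ})) : Set (E m)) →
          ∑ a, pseudoInv (vertMatrix p) i a * (x a - y a) = 0) ∧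
      euclNorm (fun a => pseudoInv (vertMatrix p) i a) = (altitude p i.succ)⁻¹) ∧
    smallSV (vertMatrix p) ≥ Real.sqrt k * thickness p * longEdge p := by
  obtain ⟨hApos, hLpos⟩ := Stmt0Aux.pos_facts hk hnd
  have hA : ∀ j : Fin (k+1), 0 < altitude p j :=
    fun j => lt_of_lt_of_le hApos (Stmt0Aux.alt_lower j)
  constructor
  · intro i
    refine ⟨?_, Stmt0Aux.norm_row_eq hA i⟩
    intro x y hx hy
    have hx' : x ∈ Stmt0Aux.HS p i := hx
    have hy' : y ∈ Stmt0Aux.HS p i := hy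
    have hu : x - y ∈ (Stmt0Aux.HS p i).direction := by
      have := AffineSubspace.vsub_mem_direction hx' hy'
      rwa [vsub_eq_sub] at this
    exact Stmt0Aux.phi_dir hA i hu
  · rw [ge_iff_le, smallSV]
    haveI := Stmt0Aux.unit_nonempty (k := k) hk
    apply le_ciInf
    intro x
    have hb := Stmt0Aux.key_bound hA hApos (fun j => Stmt0Aux.alt_lower j) hk x.1 x.2
    have hsk : 0 < Real.sqrt k := Real.sqrt_pos.2 (Nat.cast_pos.2 hk)
    have hk2 : Real.sqrt k * Real.sqrt k = (k:ℝ) := Real.mul_self_sqrt (Nat.cast_nonneg k)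
    have heq : Real.sqrt k * thickness p * longEdge p
        = (⨅ i, altitude p i) / Real.sqrt k := by
      have hkne : ((k:ℝ)) ≠ 0 := Nat.cast_ne_zero.2 hk.ne'
      rw [thickness, if_neg hk.ne', eq_div_iff hsk.ne']
      calc Real.sqrt k * ((⨅ i, altitude p i) / (k * longEdge p)) * longEdge p * Real.sqrt k
          = (Real.sqrt k * Real.sqrt k) * ((⨅ i, altitude p i) / (k * longEdge p)) * longEdge p := by
            ring
        _ = (k:ℝ) * ((⨅ i, altitude p i) / (k * longEdge p)) * longEdge p := by rw [hk2]
        _ = ⨅ i, altitude p i := by field_simp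
    rw [heq]
    exact hb
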